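/- Let a > 0 be a real number and let R₁ be the Litim regulator at scale k = 1. Then ∫_{ℝ} dω / (ω² + a + R₁(ω))³ = (1/4)·( 8/(1 + a)³ − (3 + 5a)/(a²·(1 + a)²) + 3·arctan(√a)/a^{5/2} ). -/

import Mathlib

open MeasureTheory Real Set Filter Topology

/-- The Litim regulator at scale `k`: `R_k(ω) = (k² − ω²)·θ(k² − ω²)`. -/
noncomputable def litim (k ω : ℝ) : ℝ := if ω ^ 2 < k ^ 2 then k ^ 2 - ω ^ 2 else 0

section Aux

variable (a : ℝ)

/-- antiderivative of `1/(ω²+a)³` -/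
noncomputable def litimF (ω : ℝ) : ℝ :=
  ω / (4 * a * (ω ^ 2 + a) ^ 2) + 3 * ω / (8 * a ^ 2 * (ω ^ 2 + a))
    + 3 / (8 * a ^ 2 * Real.sqrt a) * arctan (ω / Real.sqrt a)

lemma litimF_hasDerivAt (ha : 0 < a) (ω : ℝ) :
    HasDerivAt (litimF a) (1 / (ω ^ 2 + a) ^ 3) ω := by
  have hs : (0:ℝ) < Real.sqrt a := Real.sqrt_pos.2 ha
  have hs2 : Real.sqrt a ^ 2 = a := Real.sq_sqrt ha.le
  have hpos : 0 < ω ^ 2 + a := by positivity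
  have h1 : HasDerivAt (fun ω : ℝ => ω ^ 2 + a) (2 * ω) ω := by
    simpa using ((hasDerivAt_pow 2 ω).add_const a)
  have harc := (Real.hasDerivAt_arctan (ω / Real.sqrt a)).comp ω
    ((hasDerivAt_id ω).div_const (Real.sqrt a))
  have h2 := (hasDerivAt_id ω).div ((h1.pow 2).const_mul (4 * a)) (mul_ne_zero (by positivity) (pow_ne_zero _ hpos.ne'))
  have h3 := ((hasDerivAt_id ω).const_mul 3).div (h1.const_mul (8 * a ^ 2)) (by positivity)
  have hmain := (h2.add h3).add (harc.const_mul (3 / (8 * a ^ 2 * Real.sqrt a)))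
  have ha' : a ≠ 0 := ha.ne'
  have hs' : Real.sqrt a ≠ 0 := hs.ne'
  have hp' : ω ^ 2 + a ≠ 0 := hpos.ne'
  have h1a : 1 + (ω / Real.sqrt a) ^ 2 = (ω ^ 2 + a) / a := by
    field_simp
    nlinarith [hs2]
  have key : 1 / (1 + (ω / Real.sqrt a) ^ 2) * (1 / Real.sqrt a)
      = Real.sqrt a / (ω ^ 2 + a) := by
    rw [h1a]
    field_simp
    nlinarith [hs2]
  have key2 : 3 / (8 * a ^ 2 * Real.sqrt a) * (Real.sqrt a / (ω ^ 2 + a))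
      = 3 / (8 * a ^ 2 * (ω ^ 2 + a)) := by
    field_simp
  rw [key, key2] at hmain
  convert hmain using 1
  · rfl
  · rfl
  · rfl
  simp only [id_eq, Pi.pow_apply]
  field_simp
  ring

lemma litimF_tendsto (ha : 0 < a) :
    Tendsto (litimF a) atTop (𝓝 (3 / (8 * a ^ 2 * Real.sqrt a) * (π / 2))) := by
  have hs : (0:ℝ) < Real.sqrt a := Real.sqrt_pos.2 ha
  have hinv : Tendsto (fun ω : ℝ => 1 / ω) atTop (𝓝 0) := by
    simpa using tendsto_inv_atTop_zero (𝕜 := ℝ)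
  have l1 : Tendsto (fun ω : ℝ => ω / (4 * a * (ω ^ 2 + a) ^ 2)) atTop (𝓝 0) := by
    apply squeeze_zero' (g := fun ω : ℝ => (1 / (4 * a)) * (1 / ω))
    · filter_upwards [eventually_gt_atTop (0:ℝ)] with ω hω
      positivity
    · filter_upwards [eventually_ge_atTop (1:ℝ)] with ω hω
      have e : (1 / (4 * a)) * (1 / ω) = 1 / (4 * a * ω) := by ring
      rw [e, div_le_div_iff₀ (by positivity) (by positivity)]
      have h0 : 0 ≤ ω ^ 2 + a - ω := by nlinarith [sq_nonneg (ω - 1)]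
      nlinarith [sq_nonneg (ω ^ 2 + a - ω), mul_nonneg (by linarith : (0:ℝ) ≤ ω) h0, ha.le]
    · simpa using hinv.const_mul (1 / (4 * a))
  have l2 : Tendsto (fun ω : ℝ => 3 * ω / (8 * a ^ 2 * (ω ^ 2 + a))) atTop (𝓝 0) := by
    apply squeeze_zero' (g := fun ω : ℝ => (3 / (8 * a ^ 2)) * (1 / ω))
    · filter_upwards [eventually_gt_atTop (0:ℝ)] with ω hω
      positivity
    · filter_upwards [eventually_ge_atTop (1:ℝ)] with ω hω
      have e : (3 / (8 * a ^ 2)) * (1 / ω) = 3 / (8 * a ^ 2 * ω) := by ring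
      rw [e, div_le_div_iff₀ (by positivity) (by positivity)]
      nlinarith [sq_nonneg ω, ha.le, hω]
    · simpa using hinv.const_mul (3 / (8 * a ^ 2))
  have l3 : Tendsto (fun ω : ℝ => 3 / (8 * a ^ 2 * Real.sqrt a) * arctan (ω / Real.sqrt a))
      atTop (𝓝 (3 / (8 * a ^ 2 * Real.sqrt a) * (π / 2))) := by
    have := (Real.tendsto_arctan_atTop.mono_right nhdsWithin_le_nhds).comp
      (Tendsto.atTop_div_const hs tendsto_id)
    exact this.const_mul _
  have := (l1.add l2).add l3
  rw [zero_add, zero_add] at this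
  exact this

end Aux

theorem integral_litim_propagator_cube (a : ℝ) (ha : 0 < a) :
    ∫ ω : ℝ, 1 / (ω ^ 2 + a + litim 1 ω) ^ 3 =
      (1 / 4) * (8 / (1 + a) ^ 3 - (3 + 5 * a) / (a ^ 2 * (1 + a) ^ 2)
        + 3 * arctan (Real.sqrt a) / Real.sqrt a ^ 5) := by
  have hs : (0:ℝ) < Real.sqrt a := Real.sqrt_pos.2 ha
  have hs2 : Real.sqrt a ^ 2 = a := Real.sq_sqrt ha.le
  set f : ℝ → ℝ := fun ω => 1 / (ω ^ 2 + a + litim 1 ω) ^ 3 with hf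
  set g : ℝ → ℝ := fun ω => 1 / (ω ^ 2 + a) ^ 3 with hg
  have hfg : ∀ ω : ℝ, 1 ≤ ω ^ 2 → f ω = g ω := by
    intro ω hω
    simp only [hf, hg, litim, one_pow, not_lt.2 hω, if_neg, not_lt, hω, add_zero, if_false]
  -- the constant value on (-1, 1)
  have hfc : ∀ ω ∈ Ioo (-1:ℝ) 1, f ω = 1 / (1 + a) ^ 3 := by
    intro ω hω
    have h1 : ω ^ 2 < 1 := by nlinarith [hω.1, hω.2]
    simp only [hf, litim, one_pow, if_pos h1]
    ring_nf
  -- Ioi 1 part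
  have hderiv : ∀ x ∈ Ioi (1:ℝ), HasDerivAt (litimF a) (g x) x := fun x _ =>
    litimF_hasDerivAt a ha x
  have hcont : ContinuousWithinAt (litimF a) (Ici 1) 1 :=
    (litimF_hasDerivAt a ha 1).continuousAt.continuousWithinAt
  have hpos : ∀ x ∈ Ioi (1:ℝ), 0 ≤ g x := by
    intro x _; simp only [hg]; positivity
  have hIoi_int : IntegrableOn g (Ioi 1) :=
    integrableOn_Ioi_deriv_of_nonneg hcont hderiv hpos (litimF_tendsto a ha)
  have hIoi : ∫ x in Ioi (1:ℝ), g x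
      = 3 / (8 * a ^ 2 * Real.sqrt a) * (π / 2) - litimF a 1 :=
    integral_Ioi_of_hasDerivAt_of_nonneg hcont hderiv hpos (litimF_tendsto a ha)
  -- Iic (-1) part by symmetry
  have hneg : ∀ x : ℝ, g (-x) = g x := by intro x; simp [hg]
  have hIic : ∫ x in Iic (-1:ℝ), g x = ∫ x in Ioi (1:ℝ), g x := by
    rw [← integral_comp_neg_Ioi]
    simp only [hneg]
  have hIic_int : IntegrableOn g (Iic (-1:ℝ)) := by
    have m : MeasurableEmbedding (fun x : ℝ => -x) :=
      (Homeomorph.neg ℝ).isClosedEmbedding.measurableEmbedding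
    rw [← Measure.map_neg_eq_self (volume : Measure ℝ), m.integrableOn_map_iff]
    simp only [Function.comp_def, hneg, Set.neg_preimage, Set.neg_Iic, neg_neg]
    exact Iff.mpr integrableOn_Ici_iff_integrableOn_Ioi hIoi_int
  -- Ioc (-1) 1 part
  have hIoc : ∫ x in Ioc (-1:ℝ) 1, f x = 2 * (1 / (1 + a) ^ 3) := by
    rw [MeasureTheory.integral_Ioc_eq_integral_Ioo,
      setIntegral_congr_fun measurableSet_Ioo hfc, setIntegral_const, measureReal_def, Real.volume_Ioo,
      ENNReal.toReal_ofReal (by norm_num : (0:ℝ) ≤ 1 - -1)]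
    norm_num
  have hIoc_int : IntegrableOn f (Ioc (-1:ℝ) 1) := by
    have hc : IntegrableOn (fun _ : ℝ => 1 / (1 + a) ^ 3) (Ioo (-1:ℝ) 1) :=
      integrableOn_const measure_Ioo_lt_top.ne
    have hOo : IntegrableOn f (Ioo (-1:ℝ) 1) :=
      hc.congr_fun (fun x hx => (hfc x hx).symm) measurableSet_Ioo
    exact hOo.congr_set_ae Ioo_ae_eq_Ioc.symm
  -- replace f by g on the tails
  have hfg_Iic : ∀ x ∈ Iic (-1:ℝ), f x = g x := by
    intro x hx; exact hfg x (by nlinarith [hx.out])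
  have hfg_Ioi : ∀ x ∈ Ioi (1:ℝ), f x = g x := by
    intro x hx; exact hfg x (by nlinarith [hx.out])
  have hIic_intf : IntegrableOn f (Iic (-1:ℝ)) :=
    hIic_int.congr_fun (fun x hx => (hfg_Iic x hx).symm) measurableSet_Iic
  have hIoi_intf : IntegrableOn f (Ioi (1:ℝ)) :=
    hIoi_int.congr_fun (fun x hx => (hfg_Ioi x hx).symm) measurableSet_Ioi
  -- split the integral
  have hsplit : ∫ ω : ℝ, f ω
      = (∫ x in Iic (-1:ℝ), f x) + ((∫ x in Ioc (-1:ℝ) 1, f x) + ∫ x in Ioi (1:ℝ), f x) := by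
    rw [← setIntegral_union (Set.Ioc_disjoint_Ioi le_rfl) measurableSet_Ioi hIoc_int hIoi_intf,
      Set.Ioc_union_Ioi_eq_Ioi (by norm_num : (-1:ℝ) ≤ 1),
      ← setIntegral_union (Set.Iic_disjoint_Ioi le_rfl) measurableSet_Ioi hIic_intf
        ((hIoc_int.union hIoi_intf).congr_set_ae
          (by rw [Set.Ioc_union_Ioi_eq_Ioi (by norm_num : (-1:ℝ) ≤ 1)]; exact Filter.EventuallyEq.rfl)),
      Set.Iic_union_Ioi, setIntegral_univ]
  rw [hsplit, setIntegral_congr_fun measurableSet_Iic hfg_Iic,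
    setIntegral_congr_fun measurableSet_Ioi hfg_Ioi, hIic, hIoi, hIoc]
  -- final algebra
  have harct : arctan (1 / Real.sqrt a) = π / 2 - arctan (Real.sqrt a) := by
    rw [one_div, Real.arctan_inv_of_pos hs]
  have h5 : Real.sqrt a ^ 5 = a ^ 2 * Real.sqrt a := by
    rw [show (5:ℕ) = 2 * 2 + 1 from rfl, pow_succ, pow_mul, hs2]
  simp only [litimF, one_pow, harct, h5]
  have ha' : a ≠ 0 := ha.ne'
  have hs' : Real.sqrt a ≠ 0 := hs.ne'
  have h1a : (1:ℝ) + a ≠ 0 := by positivity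
  field_simp
  ring
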